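/- Let a be a pivot with a ∈ {p_1,…,p_n}. If the system mod-IP(a) has a feasible solution x ∈ {0,1}^{m×n}, then the Multiway Partitioning instance is feasible, i.e., there exists a partition A_1 ∪̇ ⋯ ∪̇ A_m of {1,…,n} with ∑_{j∈A_i} p_j = T_i for every i ∈ {1,…,m}. -/

import Mathlib

namespace ModIPProof


open Finset

variable {n m : ℕ}

def load (p : Fin n → ℕ) (σ : Fin n → Fin m) (i : Fin m) : ℕ :=
  ∑ j ∈ Finset.univ.filter (fun j => σ j = i), p j

def np (p : Fin n → ℕ) (a : ℕ) (σ : Fin n → Fin m) (i : Fin m) : ℕ :=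
  ∑ j ∈ Finset.univ.filter (fun j => σ j = i ∧ p j ≠ a), p j

def pvt (p : Fin n → ℕ) (a : ℕ) (σ : Fin n → Fin m) (i : Fin m) : ℕ :=
  (Finset.univ.filter (fun j => σ j = i ∧ p j = a)).card

lemma load_eq (p : Fin n → ℕ) (a : ℕ) (σ : Fin n → Fin m) (i : Fin m) :
    load p σ i = np p a σ i + a * pvt p a σ i := by
  unfold load np pvt
  rw [← Finset.sum_filter_add_sum_filter_not (Finset.univ.filter (fun j => σ j = i))
    (fun j => p j = a), Finset.filter_filter, Finset.filter_filter]
  have h1 : ∑ j ∈ Finset.univ.filter (fun j => σ j = i ∧ p j = a), p j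
      = a * (Finset.univ.filter (fun j => σ j = i ∧ p j = a)).card := by
    rw [Finset.sum_congr rfl (fun j hj => by
      simp only [Finset.mem_filter] at hj; exact hj.2.2)]
    simp [mul_comm]
  rw [h1, add_comm]

lemma sum_load (p : Fin n → ℕ) (σ : Fin n → Fin m) :
    ∑ i, load p σ i = ∑ j, p j := by
  unfold load
  exact Finset.sum_fiberwise _ _ _


lemma exists_zero_subset {n : ℕ} (p : Fin n → ℕ) (a : ℕ) (ha : 0 < a)
    (J : Finset (Fin n)) (hJ : a ≤ J.card) :
    ∃ S : Finset (Fin n), S ⊆ J ∧ S.Nonempty ∧ S.card ≤ a ∧ a ∣ ∑ j ∈ S, p j := by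
  haveI : NeZero a := ⟨ha.ne'⟩
  set l := J.toList with hl
  have hnd : l.Nodup := J.nodup_toList
  have hlen : l.length = J.card := J.length_toList
  have hcard : Fintype.card (ZMod a) < Fintype.card (Fin (a + 1)) := by
    simp [ZMod.card]
  obtain ⟨t₁, t₂, hne, heq⟩ :=
    Fintype.exists_ne_map_eq_of_card_lt
      (fun t : Fin (a + 1) => ((((l.take t)).map p).sum : ZMod a)) hcard
  -- wlog t₁ < t₂
  wlog hlt : (t₁ : ℕ) < (t₂ : ℕ) generalizing t₁ t₂
  · exact this t₂ t₁ hne.symm heq.symm (by have : (t₁:ℕ) ≠ (t₂:ℕ) := fun hh => hne (Fin.ext hh); omega)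
  set L := (l.take t₂).drop t₁ with hL
  have hsub : L.Sublist l := ((l.take (t₂:ℕ)).drop_sublist _).trans (l.take_sublist _)
  have hndL : L.Nodup := hsub.nodup hnd
  have hlenL : L.length = t₂ - t₁ := by
    have : (l.take (t₂:ℕ)).length = t₂ := by
      rw [List.length_take]
      have : (t₂ : ℕ) ≤ l.length := by omega
      omega
    rw [List.length_drop, this]
  refine ⟨L.toFinset, ?_, ?_, ?_, ?_⟩
  · intro j hj
    rw [List.mem_toFinset] at hj
    exact Finset.mem_toList.mp (hsub.subset hj)
  · rw [← Finset.card_pos, List.toFinset_card_of_nodup hndL, hlenL]; omega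
  · rw [List.toFinset_card_of_nodup hndL, hlenL]; omega
  · have hsumL : ∑ j ∈ L.toFinset, p j = (L.map p).sum := by
      rw [List.sum_toFinset _ hndL]
    rw [hsumL]
    have hsplit : ((l.take t₂).map p).sum = ((l.take t₁).map p).sum + (L.map p).sum := by
      have : l.take t₁ = (l.take t₂).take t₁ := by
        rw [List.take_take, min_eq_left hlt.le]
      rw [this, ← List.sum_append, ← List.map_append, List.take_append_drop]
    have : ((L.map p).sum : ZMod a) = 0 := by
      have h2 : (((l.take (t₂:ℕ)).map p).sum : ZMod a) = (((l.take (t₁:ℕ)).map p).sum : ZMod a) := heq.symm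
      rw [hsplit, Nat.cast_add] at h2
      exact left_eq_add.mp h2.symm
    exact (ZMod.natCast_eq_zero_iff _ _).mp this


def move (σ : Fin n → Fin m) (S : Finset (Fin n)) (i₀ : Fin m) : Fin n → Fin m :=
  fun j => if j ∈ S then i₀ else σ j

variable {p : Fin n → ℕ} {a : ℕ} {σ : Fin n → Fin m} {S : Finset (Fin n)} {i i₀ : Fin m}

lemma filter_move_ne (Q : Fin n → Prop) [DecidablePred Q] {i' : Fin m} (h : i' ≠ i₀) :
    Finset.univ.filter (fun j => move σ S i₀ j = i' ∧ Q j)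
      = (Finset.univ.filter (fun j => σ j = i' ∧ Q j)) \ S := by
  ext j
  by_cases hj : j ∈ S <;> simp only [Finset.mem_filter, Finset.mem_sdiff, Finset.mem_univ, true_and] <;> simp [move, hj, h.symm]

lemma filter_move_tgt (Q : Fin n → Prop) [DecidablePred Q]
    (hS : ∀ j ∈ S, σ j = i ∧ Q j) (h : i ≠ i₀) :
    Finset.univ.filter (fun j => move σ S i₀ j = i₀ ∧ Q j)
      = (Finset.univ.filter (fun j => σ j = i₀ ∧ Q j)) ∪ S := by
  ext j
  by_cases hj : j ∈ S
  · simp [move, hj, (hS j hj).2]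
  · simp [move, hj]

lemma sum_filter_move_src (f : Fin n → ℕ) (Q : Fin n → Prop) [DecidablePred Q]
    (hS : ∀ j ∈ S, σ j = i ∧ Q j) (h : i ≠ i₀) :
    (∑ j ∈ Finset.univ.filter (fun j => move σ S i₀ j = i ∧ Q j), f j) + ∑ j ∈ S, f j
      = ∑ j ∈ Finset.univ.filter (fun j => σ j = i ∧ Q j), f j := by
  rw [filter_move_ne Q h]
  exact Finset.sum_sdiff (fun j hj => by simp [hS j hj])

lemma sum_filter_move_tgt (f : Fin n → ℕ) (Q : Fin n → Prop) [DecidablePred Q]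
    (hS : ∀ j ∈ S, σ j = i ∧ Q j) (h : i ≠ i₀) :
    ∑ j ∈ Finset.univ.filter (fun j => move σ S i₀ j = i₀ ∧ Q j), f j
      = (∑ j ∈ Finset.univ.filter (fun j => σ j = i₀ ∧ Q j), f j) + ∑ j ∈ S, f j := by
  rw [filter_move_tgt Q hS h, Finset.sum_union]
  rw [Finset.disjoint_right]
  intro j hj hj'
  simp only [Finset.mem_filter, Finset.mem_univ, true_and] at hj'
  exact h ((hS j hj).1.symm.trans hj'.1)

lemma sum_filter_move_other (f : Fin n → ℕ) (Q : Fin n → Prop) [DecidablePred Q]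
    (hS : ∀ j ∈ S, σ j = i ∧ Q j) {i' : Fin m} (h1 : i' ≠ i) (h2 : i' ≠ i₀) :
    ∑ j ∈ Finset.univ.filter (fun j => move σ S i₀ j = i' ∧ Q j), f j
      = ∑ j ∈ Finset.univ.filter (fun j => σ j = i' ∧ Q j), f j := by
  rw [filter_move_ne Q h2]
  congr 1
  rw [Finset.sdiff_eq_self_iff_disjoint]
  rw [Finset.disjoint_right]
  intro j hjS hjf
  simp only [Finset.mem_filter, Finset.mem_univ, true_and] at hjf
  exact h1 (hjf.1.symm.trans (hS j hjS).1)

lemma pvt_filter_move (hS : ∀ j ∈ S, p j ≠ a) (i' : Fin m) :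
    Finset.univ.filter (fun j => move σ S i₀ j = i' ∧ p j = a)
      = Finset.univ.filter (fun j => σ j = i' ∧ p j = a) := by
  ext j
  simp only [Finset.mem_filter, Finset.mem_univ, true_and]
  by_cases hj : j ∈ S
  · simp [move, hj, hS j hj]
  · simp [move, hj]


lemma sum_big_load (p : Fin n → ℕ) (T : Fin m → ℕ) (pmax : ℕ)
    (hsum : ∑ j, p j = ∑ i, T i) (σ : Fin n → Fin m)
    (hsmall : ∀ i, T i < pmax^4 → load p σ i = T i) :
    ∑ i ∈ Finset.univ.filter (fun i : Fin m => pmax^4 ≤ T i), load p σ i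
      = ∑ i ∈ Finset.univ.filter (fun i : Fin m => pmax^4 ≤ T i), T i := by
  have h1 : ∑ i, load p σ i = ∑ i, T i := by rw [sum_load, hsum]
  rw [← Finset.sum_filter_add_sum_filter_not Finset.univ (fun i : Fin m => pmax^4 ≤ T i)
      (load p σ), ← Finset.sum_filter_add_sum_filter_not Finset.univ
      (fun i : Fin m => pmax^4 ≤ T i) T] at h1
  have h2 : ∑ i ∈ Finset.univ.filter (fun i : Fin m => ¬ pmax^4 ≤ T i), load p σ i
      = ∑ i ∈ Finset.univ.filter (fun i : Fin m => ¬ pmax^4 ≤ T i), T i := by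
    apply Finset.sum_congr rfl
    intro i hi
    simp only [Finset.mem_filter, not_le] at hi
    exact hsmall i hi.2
  omega

lemma reduce (p : Fin n → ℕ) (T : Fin m → ℕ) (pmax a : ℕ)
    (hp : ∀ j, 0 < p j) (hpm : ∀ j, p j ≤ pmax) (ha : 0 < a) (hapm : a ≤ pmax)
    (hsum : ∑ j, p j = ∑ i, T i) :
    ∀ N : ℕ, ∀ σ : Fin n → Fin m,
      (∑ i ∈ Finset.univ.filter (fun i : Fin m => pmax^4 ≤ T i), (np p a σ i - T i)) ≤ N →
      (∀ i, T i < pmax^4 → load p σ i = T i) →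
      (∀ i, pmax^4 ≤ T i → load p σ i ≡ T i [MOD a]) →
      (pmax^2 * (Finset.univ.filter (fun i : Fin m => pmax^4 ≤ T i)).card ≤
        ∑ i ∈ Finset.univ.filter (fun i : Fin m => pmax^4 ≤ T i), pvt p a σ i) →
      ∃ σ' : Fin n → Fin m,
        (∀ i, T i < pmax^4 → load p σ' i = T i) ∧
        (∀ i, pmax^4 ≤ T i → load p σ' i ≡ T i [MOD a]) ∧
        (pmax^2 * (Finset.univ.filter (fun i : Fin m => pmax^4 ≤ T i)).card ≤
          ∑ i ∈ Finset.univ.filter (fun i : Fin m => pmax^4 ≤ T i), pvt p a σ' i) ∧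
        (∀ i, pmax^4 ≤ T i → np p a σ' i ≤ T i) := by
  have hpmax0 : 0 < pmax := lt_of_lt_of_le ha hapm
  intro N
  induction N with
  | zero =>
    intro σ hΨ h1 h2 h3
    refine ⟨σ, h1, h2, h3, ?_⟩
    intro i hi
    have hmem : i ∈ Finset.univ.filter (fun i : Fin m => pmax^4 ≤ T i) := by
      simp [hi]
    have := Finset.single_le_sum (f := fun i => np p a σ i - T i)
      (fun i _ => Nat.zero_le _) hmem
    omega
  | succ N ih =>
    intro σ hΨ h1 h2 h3
    set B := Finset.univ.filter (fun i : Fin m => pmax^4 ≤ T i) with hB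
    by_cases hall : ∀ i ∈ B, np p a σ i ≤ T i
    · exact ⟨σ, h1, h2, h3, fun i hi => hall i (by simp [hB, hi])⟩
    push_neg at hall
    obtain ⟨i, hiB, hi⟩ := hall
    have hiBig : pmax^4 ≤ T i := by simpa [hB] using hiB
    -- find target machine i'
    have hex : ∃ i' ∈ B, np p a σ i' + a * pmax^2 ≤ T i' := by
      by_contra hno
      push_neg at hno
      have hBne : B.Nonempty := ⟨i, hiB⟩
      have hlt : ∑ i' ∈ B, T i' < ∑ i' ∈ B, (np p a σ i' + a * pmax^2) :=
        Finset.sum_lt_sum_of_nonempty hBne hno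
      rw [Finset.sum_add_distrib, Finset.sum_const, smul_eq_mul] at hlt
      have hload : ∑ i' ∈ B, load p σ i' = ∑ i' ∈ B, T i' :=
        sum_big_load p T pmax hsum σ h1
      have hsplit : ∑ i' ∈ B, load p σ i'
          = ∑ i' ∈ B, np p a σ i' + a * ∑ i' ∈ B, pvt p a σ i' := by
        rw [Finset.mul_sum, ← Finset.sum_add_distrib]
        exact Finset.sum_congr rfl (fun i' _ => load_eq p a σ i')
      rw [hsplit] at hload
      have hkey : a * ∑ i' ∈ B, pvt p a σ i' < B.card * (a * pmax^2) := by omega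
      have : a * ∑ i' ∈ B, pvt p a σ i' < a * (pmax^2 * B.card) := by
        calc a * ∑ i' ∈ B, pvt p a σ i' < B.card * (a * pmax^2) := hkey
        _ = a * (pmax^2 * B.card) := by ring
      have := Nat.lt_of_mul_lt_mul_left this
      omega
    obtain ⟨i', hi'B, hi'⟩ := hex
    have hii' : i ≠ i' := by
      intro h
      subst h
      have : 0 < a * pmax^2 := by positivity
      omega
    -- choose the set S to move
    set J := Finset.univ.filter (fun j => σ j = i ∧ p j ≠ a) with hJ
    have hnpJ : np p a σ i = ∑ j ∈ J, p j := rfl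
    have hJub : ∑ j ∈ J, p j ≤ J.card * pmax := by
      calc ∑ j ∈ J, p j ≤ ∑ _j ∈ J, pmax := Finset.sum_le_sum (fun j _ => hpm j)
      _ = J.card * pmax := by rw [Finset.sum_const, smul_eq_mul]
    have hJcard : a ≤ J.card := by
      have h4 : pmax^4 < J.card * pmax := by omega
      have h5 : pmax^3 * pmax = pmax^4 := by ring
      have h6 : pmax^3 < J.card := by
        by_contra hc
        push_neg at hc
        have : J.card * pmax ≤ pmax^3 * pmax := Nat.mul_le_mul_right _ hc
        omega
      have h7 : pmax ≤ pmax^3 := Nat.le_self_pow (by norm_num) pmax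
      omega
    obtain ⟨S, hSJ, hSne, hScard, hSdvd⟩ := exists_zero_subset p a ha J hJcard
    have hSprop : ∀ j ∈ S, σ j = i ∧ p j ≠ a := by
      intro j hj
      have := hSJ hj
      simpa [hJ] using this
    set s := ∑ j ∈ S, p j with hs
    have hs_pos : 0 < s := by
      obtain ⟨j, hj⟩ := hSne
      have := Finset.single_le_sum (f := p) (fun j _ => Nat.zero_le _) hj
      have := hp j
      omega
    have hs_le : s ≤ a * pmax := by
      calc s ≤ ∑ _j ∈ S, pmax := Finset.sum_le_sum (fun j _ => hpm j)
      _ = S.card * pmax := by rw [Finset.sum_const, smul_eq_mul]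
      _ ≤ a * pmax := Nat.mul_le_mul_right _ hScard
    have hs_np : s ≤ np p a σ i := by
      rw [hnpJ]
      exact Finset.sum_le_sum_of_subset hSJ
    have hpm2 : a * pmax ≤ a * pmax^2 := by
      have : pmax ≤ pmax^2 := Nat.le_self_pow (by norm_num) pmax
      exact Nat.mul_le_mul_left _ this
    set σ' := move σ S i' with hσ'
    -- np transformation facts
    have hnp_src : np p a σ' i + s = np p a σ i :=
      sum_filter_move_src p (fun j => p j ≠ a) hSprop hii'
    have hnp_tgt : np p a σ' i' = np p a σ i' + s :=
      sum_filter_move_tgt p (fun j => p j ≠ a) hSprop hii'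
    have hnp_other : ∀ i'', i'' ≠ i → i'' ≠ i' → np p a σ' i'' = np p a σ i'' :=
      fun i'' h1' h2' => sum_filter_move_other p (fun j => p j ≠ a) hSprop h1' h2'
    have hpvt : ∀ i'', pvt p a σ' i'' = pvt p a σ i'' := by
      intro i''
      unfold pvt
      rw [pvt_filter_move (fun j hj => (hSprop j hj).2) i'']
    -- load transformation facts
    have hload_src : load p σ' i + s = load p σ i := by
      rw [load_eq p a σ' i, load_eq p a σ i, hpvt i]
      omega
    have hload_tgt : load p σ' i' = load p σ i' + s := by
      rw [load_eq p a σ' i', load_eq p a σ i', hpvt i']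
      omega
    have hload_other : ∀ i'', i'' ≠ i → i'' ≠ i' → load p σ' i'' = load p σ i'' := by
      intro i'' h1' h2'
      rw [load_eq p a σ' i'', load_eq p a σ i'', hpvt i'', hnp_other i'' h1' h2']
    -- invariants for σ'
    have h1' : ∀ i'', T i'' < pmax^4 → load p σ' i'' = T i'' := by
      intro i'' hsm
      have hA : i'' ≠ i := fun h => by subst h; omega
      have hA' : i'' ≠ i' := fun h => by
        subst h
        have : pmax^4 ≤ T i'' := by simpa [hB] using hi'B
        omega
      rw [hload_other i'' hA hA']
      exact h1 i'' hsm
    have h2' : ∀ i'', pmax^4 ≤ T i'' → load p σ' i'' ≡ T i'' [MOD a] := by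
      intro i'' hbig
      rcases eq_or_ne i'' i with rfl | hA
      · have hcong : load p σ' i'' ≡ load p σ' i'' + s [MOD a] := by
          conv_lhs => rw [← add_zero (load p σ' i'')]
          exact Nat.ModEq.add_left _ ((Nat.modEq_zero_iff_dvd).mpr hSdvd).symm
        rw [hload_src] at hcong
        exact hcong.trans (h2 _ hbig)
      rcases eq_or_ne i'' i' with rfl | hA'
      · rw [hload_tgt]
        have hcong : load p σ i'' + 0 ≡ load p σ i'' + s [MOD a] :=
          Nat.ModEq.add_left _ ((Nat.modEq_zero_iff_dvd).mpr hSdvd).symm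
        rw [add_zero] at hcong
        exact hcong.symm.trans (h2 _ hbig)
      · rw [hload_other i'' hA hA']
        exact h2 i'' hbig
    have h3' : pmax^2 * B.card ≤ ∑ i'' ∈ B, pvt p a σ' i'' := by
      calc pmax^2 * B.card ≤ ∑ i'' ∈ B, pvt p a σ i'' := h3
      _ = ∑ i'' ∈ B, pvt p a σ' i'' := (Finset.sum_congr rfl (fun i'' _ => (hpvt i'').symm))
    -- measure decrease
    have hΨ' : ∑ i'' ∈ B, (np p a σ' i'' - T i'') ≤ N := by
      have hstrict : ∑ i'' ∈ B, (np p a σ' i'' - T i'') < ∑ i'' ∈ B, (np p a σ i'' - T i'') := by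
        apply Finset.sum_lt_sum
        · intro i'' hmem
          rcases eq_or_ne i'' i with rfl | hA
          · omega
          rcases eq_or_ne i'' i' with rfl | hA'
          · have : np p a σ' i'' = np p a σ i'' + s := hnp_tgt
            omega
          · rw [hnp_other i'' hA hA']
        · exact ⟨i, hiB, by omega⟩
      omega
    exact ih σ' hΨ' h1' h2' h3'


lemma fiber_card (c : Fin m → ℕ) (i : Fin m) :
    Fintype.card {z : Σ i' : Fin m, Fin (c i') // z.1 = i} = c i := by
  rw [← Fintype.card_fin (c i)]
  apply Fintype.card_congr
  refine ⟨fun z => Fin.cast (by rw [z.2]) z.1.2, fun w => ⟨⟨i, w⟩, rfl⟩, ?_, ?_⟩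
  · rintro ⟨⟨i1, w⟩, hz⟩
    simp only at hz
    subst hz
    rfl
  · intro w
    rfl

lemma finish (p : Fin n → ℕ) (T : Fin m → ℕ) (pmax a : ℕ)
    (ha : 0 < a)
    (hsum : ∑ j, p j = ∑ i, T i) (σ : Fin n → Fin m)
    (h1 : ∀ i, T i < pmax^4 → load p σ i = T i)
    (h2 : ∀ i, pmax^4 ≤ T i → load p σ i ≡ T i [MOD a])
    (h4 : ∀ i, pmax^4 ≤ T i → np p a σ i ≤ T i) :
    ∃ σ'' : Fin n → Fin m, ∀ i, load p σ'' i = T i := by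
  classical
  set B := Finset.univ.filter (fun i : Fin m => pmax^4 ≤ T i) with hB
  -- divisibility on big machines
  have hdvd : ∀ i ∈ B, a ∣ T i - np p a σ i := by
    intro i hi
    have hbig : pmax^4 ≤ T i := by simpa [hB] using hi
    have hnp : np p a σ i ≡ T i [MOD a] := by
      have : np p a σ i ≡ np p a σ i + a * pvt p a σ i [MOD a] := by
        conv_lhs => rw [← add_zero (np p a σ i)]
        exact Nat.ModEq.add_left _ ((Nat.modEq_zero_iff_dvd).mpr ⟨pvt p a σ i, rfl⟩).symm
      rw [← load_eq] at this
      exact this.trans (h2 i hbig)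
    exact (Nat.modEq_iff_dvd' (h4 i hbig)).mp hnp
  set c : Fin m → ℕ := fun i => if pmax^4 ≤ T i then (T i - np p a σ i) / a else 0 with hc
  have hac : ∀ i ∈ B, a * c i = T i - np p a σ i := by
    intro i hi
    have hbig : pmax^4 ≤ T i := by simpa [hB] using hi
    simp only [hc, if_pos hbig]
    exact Nat.mul_div_cancel' (hdvd i hi)
  set P := Finset.univ.filter (fun j => p j = a ∧ pmax^4 ≤ T (σ j)) with hP
  -- card of P
  have hPcard : P.card = ∑ i ∈ B, pvt p a σ i := by
    rw [Finset.card_eq_sum_card_fiberwise (f := σ) (t := B)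
      (fun j hj => by simp only [Finset.mem_coe, hP, Finset.mem_filter] at hj; simp [hB, hj.2.2])]
    apply Finset.sum_congr rfl
    intro i hi
    have hbig : pmax^4 ≤ T i := by simpa [hB] using hi
    unfold pvt
    congr 1
    ext j
    simp only [hP, Finset.mem_filter, Finset.mem_univ, true_and]
    constructor
    · rintro ⟨⟨hpj, _⟩, hσ⟩; exact ⟨hσ, hpj⟩
    · rintro ⟨hσ, hpj⟩; exact ⟨⟨hpj, by rw [hσ]; exact hbig⟩, hσ⟩
  -- total count matches
  have hload : ∑ i ∈ B, load p σ i = ∑ i ∈ B, T i := sum_big_load p T pmax hsum σ h1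
  have hsum_c : ∑ i ∈ B, c i = ∑ i ∈ B, pvt p a σ i := by
    have e1 : ∑ i ∈ B, (np p a σ i + a * c i) = ∑ i ∈ B, T i := by
      apply Finset.sum_congr rfl
      intro i hi
      have hbig : pmax^4 ≤ T i := by simpa [hB] using hi
      rw [hac i hi]
      have := h4 i hbig
      omega
    have e2 : ∑ i ∈ B, (np p a σ i + a * pvt p a σ i) = ∑ i ∈ B, T i := by
      rw [← hload]
      exact Finset.sum_congr rfl (fun i _ => (load_eq p a σ i).symm)
    rw [Finset.sum_add_distrib, ← Finset.mul_sum] at e1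
    rw [Finset.sum_add_distrib, ← Finset.mul_sum] at e2
    have hfin : a * ∑ i ∈ B, c i = a * ∑ i ∈ B, pvt p a σ i := by omega
    exact Nat.eq_of_mul_eq_mul_left ha hfin
  have hcard_eq : Fintype.card (Σ i : Fin m, Fin (c i)) = Fintype.card {j // j ∈ P} := by
    rw [Fintype.card_sigma, Fintype.card_coe]
    simp only [Fintype.card_fin]
    rw [hPcard, ← hsum_c]
    rw [Finset.sum_filter]
    apply Finset.sum_congr rfl
    intro i _
    by_cases hbig : pmax^4 ≤ T i <;> simp [hc, hbig]
  set e := Fintype.equivOfCardEq hcard_eq.symm with he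
  set σ'' : Fin n → Fin m := fun j => if h : j ∈ P then (e ⟨j, h⟩).1 else σ j with hσ''
  refine ⟨σ'', ?_⟩
  intro i
  -- split the load
  have hsplit : load p σ'' i
      = (∑ j ∈ (Finset.univ.filter (fun j => σ'' j = i)).filter (fun j => j ∈ P), p j)
        + ∑ j ∈ (Finset.univ.filter (fun j => σ'' j = i)).filter (fun j => j ∉ P), p j := by
    unfold load
    exact (Finset.sum_filter_add_sum_filter_not _ _ _).symm
  have houtside : (Finset.univ.filter (fun j => σ'' j = i)).filter (fun j => j ∉ P)
      = Finset.univ.filter (fun j => σ j = i ∧ j ∉ P) := by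
    ext j
    by_cases hj : j ∈ P <;> simp [hσ'', hj]
  by_cases hbig : pmax^4 ≤ T i
  · -- big machine
    have hiB : i ∈ B := by simp [hB, hbig]
    have hout : ∑ j ∈ Finset.univ.filter (fun j => σ j = i ∧ j ∉ P), p j = np p a σ i := by
      apply Finset.sum_congr _ (fun _ _ => rfl)
      ext j
      have hmemP : j ∈ P ↔ (p j = a ∧ pmax^4 ≤ T (σ j)) := by simp [hP]
      simp only [Finset.mem_filter, Finset.mem_univ, true_and, hmemP]
      constructor
      · rintro ⟨hσ, hnp⟩
        exact ⟨hσ, fun hpj => hnp ⟨hpj, by rw [hσ]; exact hbig⟩⟩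
      · rintro ⟨hσ, hpj⟩
        exact ⟨hσ, fun hmem => hpj hmem.1⟩
    -- the pivot part
    have hin : ∑ j ∈ (Finset.univ.filter (fun j => σ'' j = i)).filter (fun j => j ∈ P), p j
        = a * c i := by
      have hall_a : ∀ j ∈ (Finset.univ.filter (fun j => σ'' j = i)).filter (fun j => j ∈ P),
          p j = a := by
        intro j hj
        simp only [Finset.mem_filter, hP, Finset.mem_univ, true_and] at hj
        exact hj.2.1
      rw [Finset.sum_congr rfl hall_a, Finset.sum_const, smul_eq_mul, mul_comm]
      congr 1
      -- card equals c i
      have hcardA : ((Finset.univ.filter (fun j => σ'' j = i)).filter (fun j => j ∈ P)).card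
          = (P.attach.filter (fun y => (e y).1 = i)).card := by
        apply Finset.card_bij (fun (y : {x // x ∈ P}) _ => y.val) ?_ ?_ ?_ |>.symm
        · intro y hy
          simp only [Finset.mem_filter, Finset.mem_attach, true_and] at hy
          simp only [Finset.mem_filter, Finset.mem_univ, true_and]
          exact ⟨by rw [hσ'']; simp [y.property]; exact hy, y.property⟩
        · intro y _ y' _ h
          exact Subtype.ext h
        · intro j hj
          simp only [Finset.mem_filter, Finset.mem_univ, true_and] at hj
          refine ⟨⟨j, hj.2⟩, ?_, rfl⟩
          simp only [Finset.mem_filter, Finset.mem_attach, true_and]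
          have := hj.1
          rw [hσ''] at this
          simpa [hj.2] using this
      rw [hcardA]
      -- the attach filter card
      have : (P.attach.filter (fun y => (e y).1 = i)).card
          = Fintype.card {y : {x // x ∈ P} // (e y).1 = i} := by
        rw [Fintype.card_subtype]
        congr 1
      rw [this]
      have hcg : Fintype.card {y : {x // x ∈ P} // (e y).1 = i}
          = Fintype.card {z : Σ i' : Fin m, Fin (c i') // z.1 = i} :=
        Fintype.card_congr (Equiv.subtypeEquiv e (fun y => Iff.rfl))
      rw [hcg]
      exact fiber_card c i
    rw [hsplit, houtside, hout, hin]
    have := hac i hiB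
    have := h4 i hbig
    omega
  · -- small machine
    have hout : ∑ j ∈ Finset.univ.filter (fun j => σ j = i ∧ j ∉ P), p j = T i := by
      rw [← h1 i (not_le.mp hbig)]
      apply Finset.sum_congr _ (fun _ _ => rfl)
      ext j
      have hmemP : j ∈ P ↔ (p j = a ∧ pmax^4 ≤ T (σ j)) := by simp [hP]
      simp only [Finset.mem_filter, Finset.mem_univ, true_and, hmemP]
      constructor
      · rintro ⟨hσ, _⟩; exact hσ
      · intro hσ
        exact ⟨hσ, fun hmem => hbig (by rw [← hσ]; exact hmem.2)⟩
    have hin : (Finset.univ.filter (fun j => σ'' j = i)).filter (fun j => j ∈ P) = ∅ := by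
      rw [Finset.filter_eq_empty_iff]
      intro j hj hjP
      simp only [Finset.mem_filter, Finset.mem_univ, true_and] at hj
      simp only [hσ'', dif_pos hjP] at hj
      -- (e ⟨j, hjP⟩).1 = i, but then Fin (c i) is nonempty so c i > 0
      have hpos : 0 < c ((e ⟨j, hjP⟩).1) := (e ⟨j, hjP⟩).2.pos
      rw [hj] at hpos
      simp only [hc, if_neg hbig] at hpos
      omega
    rw [hsplit, houtside, hout, hin]
    simp


end ModIPProof


/-- Feasibility of a Multiway Partitioning instance: a partition
`A_1 ∪̇ ⋯ ∪̇ A_m` of the jobs (encoded by an assignment `σ`) with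
`∑_{j ∈ A_i} p_j = T_i` for every machine `i`. -/
def MultiwayFeasible (n m : ℕ) (p : Fin n → ℕ) (T : Fin m → ℕ) : Prop :=
  ∃ σ : Fin n → Fin m,
    ∀ i : Fin m, ∑ j ∈ Finset.univ.filter (fun j => σ j = i), p j = T i

/-- Feasibility of the system mod-IP(a) in binary variables `x i j`.
Small machines are those with `T i < pmax ^ 4`, big machines the others. -/
def ModIPFeasible (n m : ℕ) (p : Fin n → ℕ) (T : Fin m → ℕ) (pmax a : ℕ) : Prop :=
  ∃ x : Fin m → Fin n → ℕ,
    (∀ i j, x i j ≤ 1) ∧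
    (∀ i : Fin m, T i < pmax ^ 4 → ∑ j, p j * x i j = T i) ∧
    (∀ i : Fin m, pmax ^ 4 ≤ T i → ∑ j, p j * x i j ≡ T i [MOD a]) ∧
    (pmax ^ 2 * (Finset.univ.filter (fun i : Fin m => pmax ^ 4 ≤ T i)).card ≤
      ∑ j ∈ Finset.univ.filter (fun j => p j = a),
        ∑ i ∈ Finset.univ.filter (fun i : Fin m => pmax ^ 4 ≤ T i), x i j) ∧
    (∀ j : Fin n, ∑ i, x i j = 1)

/-- If mod-IP(a) is feasible for a pivot `a ∈ {p_1,…,p_n}`, then the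
Multiway Partitioning instance is feasible. -/
theorem modIP_feasible_implies_multiway_feasible
    (n m : ℕ) (hm : 1 ≤ m) (hmn : m ≤ n)
    (p : Fin n → ℕ) (hp : ∀ j, 0 < p j)
    (T : Fin m → ℕ)
    (hsum : ∑ j, p j = ∑ i, T i)
    (pmax : ℕ) (hpmax : pmax = Finset.univ.sup p)
    (a : ℕ) (ha : ∃ j : Fin n, p j = a)
    (hfeas : ModIPFeasible n m p T pmax a) :
    MultiwayFeasible n m p T := by
  classical
  obtain ⟨x, hbin, hsmallx, hbigx, hpiv, hone⟩ := hfeas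
  obtain ⟨j₀, hj₀⟩ := ha
  have ha' : 0 < a := hj₀ ▸ hp j₀
  have hpm : ∀ j, p j ≤ pmax := fun j => hpmax ▸ Finset.le_sup (Finset.mem_univ j)
  have hapm : a ≤ pmax := hj₀ ▸ hpm j₀
  -- extract the assignment encoded by x
  have hex : ∀ j, ∃ i, x i j = 1 := by
    intro j
    by_contra h
    push_neg at h
    have hz : ∑ i, x i j = 0 :=
      Finset.sum_eq_zero (fun i _ => by have h1 := hbin i j; have h2 := h i; omega)
    have := hone j
    omega
  set σ₀ : Fin n → Fin m := fun j => Classical.choose (hex j) with hσ₀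
  have hval : ∀ i j, x i j = if σ₀ j = i then 1 else 0 := by
    intro i j
    by_cases h : σ₀ j = i
    · rw [if_pos h, ← h]
      exact Classical.choose_spec (hex j)
    · rw [if_neg h]
      by_contra hne
      have hx1 : x i j = 1 := by have := hbin i j; omega
      have hσ1 : x (σ₀ j) j = 1 := Classical.choose_spec (hex j)
      have hpair : ∑ i' ∈ ({i, σ₀ j} : Finset (Fin m)), x i' j = 2 := by
        rw [Finset.sum_pair (fun hh => h hh.symm)]
        omega
      have h2 : 2 ≤ ∑ i', x i' j := by
        rw [← hpair]
        exact Finset.sum_le_sum_of_subset (Finset.subset_univ _)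
      have := hone j
      omega
  have hloadx : ∀ i, ∑ j, p j * x i j = ModIPProof.load p σ₀ i := by
    intro i
    unfold ModIPProof.load
    rw [Finset.sum_filter]
    apply Finset.sum_congr rfl
    intro j _
    rw [hval i j]
    by_cases h : σ₀ j = i <;> simp [h]
  have h1 : ∀ i, T i < pmax^4 → ModIPProof.load p σ₀ i = T i := fun i hi => by
    rw [← hloadx i]; exact hsmallx i hi
  have h2 : ∀ i, pmax^4 ≤ T i → ModIPProof.load p σ₀ i ≡ T i [MOD a] := fun i hi => by
    rw [← hloadx i]; exact hbigx i hi
  have h3 : pmax^2 * (Finset.univ.filter (fun i : Fin m => pmax^4 ≤ T i)).card ≤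
      ∑ i ∈ Finset.univ.filter (fun i : Fin m => pmax^4 ≤ T i), ModIPProof.pvt p a σ₀ i := by
    have hswap : ∑ j ∈ Finset.univ.filter (fun j => p j = a),
        ∑ i ∈ Finset.univ.filter (fun i : Fin m => pmax^4 ≤ T i), x i j
        = ∑ i ∈ Finset.univ.filter (fun i : Fin m => pmax^4 ≤ T i),
            ∑ j ∈ Finset.univ.filter (fun j => p j = a), x i j := Finset.sum_comm
    have hinner : ∀ i, ∑ j ∈ Finset.univ.filter (fun j => p j = a), x i j
        = ModIPProof.pvt p a σ₀ i := by
      intro i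
      have hc : ∑ j ∈ Finset.univ.filter (fun j => p j = a), x i j
          = ((Finset.univ.filter (fun j => p j = a)).filter (fun j => σ₀ j = i)).card := by
        rw [Finset.card_filter]
        apply Finset.sum_congr rfl
        intro j _
        rw [hval i j]
      rw [hc]
      unfold ModIPProof.pvt
      congr 1
      rw [Finset.filter_filter]
      apply Finset.filter_congr
      intro j _
      tauto
    calc pmax^2 * (Finset.univ.filter (fun i : Fin m => pmax^4 ≤ T i)).card
        ≤ ∑ j ∈ Finset.univ.filter (fun j => p j = a),
            ∑ i ∈ Finset.univ.filter (fun i : Fin m => pmax^4 ≤ T i), x i j := hpiv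
      _ = ∑ i ∈ Finset.univ.filter (fun i : Fin m => pmax^4 ≤ T i),
            ∑ j ∈ Finset.univ.filter (fun j => p j = a), x i j := hswap
      _ = ∑ i ∈ Finset.univ.filter (fun i : Fin m => pmax^4 ≤ T i),
            ModIPProof.pvt p a σ₀ i := Finset.sum_congr rfl (fun i _ => hinner i)
  -- apply the rebalancing procedure
  obtain ⟨σ', h1', h2', h3', h4'⟩ :=
    ModIPProof.reduce p T pmax a hp hpm ha' hapm hsum
      (∑ i ∈ Finset.univ.filter (fun i : Fin m => pmax^4 ≤ T i), (ModIPProof.np p a σ₀ i - T i))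
      σ₀ le_rfl h1 h2 h3
  obtain ⟨σ'', hσ''⟩ := ModIPProof.finish p T pmax a ha' hsum σ' h1' h2' h4'
  exact ⟨σ'', fun i => hσ'' i⟩
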